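/- Define H-ideals N_α of an H-module algebra R by transfinite recursion: N₀ = 0; N_{α+1}/N_α is the sum of all nilpotent H-ideals of R/N_α; N_β = Σ_{α<β} N_α for limit β. If τ is an ordinal with N_τ = N_{τ+1}, then N_τ = r_{Hb}(R) = ∩{ I : I is an H-semiprime ideal of R }. -/

import Mathlib

open scoped TensorProduct

class HModAlg (k H R : Type*) [CommRing k] [Ring H] [Algebra k H]
    [Coalgebra k H] [NonUnitalRing R] [Module k R]
    [SMulCommClass k R R] [IsScalarTower k R R] where
  hsmul : H →ₗ[k] R →ₗ[k] R
  one_hsmul : ∀ r : R, hsmul 1 r = r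
  mul_hsmul : ∀ (h h' : H) (r : R), hsmul (h * h') r = hsmul h (hsmul h' r)
  hsmul_mul : ∀ (h : H) (a b : R),
    hsmul h (a * b) =
      LinearMap.mul' k R
        (TensorProduct.map (hsmul.flip a) (hsmul.flip b) (Coalgebra.comul h))

/-- product f 0 * f 1 * ⋯ * f n -/
def prodSeq {R : Type*} [Mul R] (f : ℕ → R) : ℕ → R
  | 0 => f 0
  | n + 1 => prodSeq f n * f (n + 1)

/-- `I` is a nilpotent subset: some power of it vanishes. -/
def IsNilpotentSet {R : Type*} [Mul R] [Zero R] (I : Set R) : Prop :=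
  ∃ n : ℕ, ∀ f : ℕ → R, (∀ i, f i ∈ I) → prodSeq f n = 0

/-- `I` is nilpotent modulo `J`. -/
def IsNilpotentSetMod {R : Type*} [Mul R] (I J : Set R) : Prop :=
  ∃ n : ℕ, ∀ f : ℕ → R, (∀ i, f i ∈ I) → prodSeq f n ∈ J

section Defs

variable (k H : Type*) {R : Type*} [CommRing k] [Ring H] [Algebra k H]
  [Coalgebra k H] [NonUnitalRing R] [Module k R]
  [SMulCommClass k R R] [IsScalarTower k R R] [HModAlg k H R]

/-- The action of `h : H` on `r : R`. -/
def hact (h : H) (r : R) : R := HModAlg.hsmul (k := k) h r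

/-- `I` is an `H`-ideal of the `H`-module (sub)algebra `B ⊆ R`. -/
structure IsHIdealIn (B I : Set R) : Prop where
  subset : I ⊆ B
  zero_mem : (0 : R) ∈ I
  add_mem : ∀ {x y : R}, x ∈ I → y ∈ I → x + y ∈ I
  neg_mem : ∀ {x : R}, x ∈ I → -x ∈ I
  mul_mem_left : ∀ {x : R}, x ∈ B → ∀ {y : R}, y ∈ I → x * y ∈ I
  mul_mem_right : ∀ {x : R}, x ∈ I → ∀ {y : R}, y ∈ B → x * y ∈ I
  hsmul_mem : ∀ (h : H) {x : R}, x ∈ I → hact k H h x ∈ I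

/-- `I` is an `H`-ideal of `R`. -/
def IsHIdeal (I : Set R) : Prop := IsHIdealIn k H Set.univ I

/-- `R` is `H`-semiprime. -/
def IsHSemiprime : Prop :=
  ∀ I : Set R, IsHIdeal k H I → IsNilpotentSet I → I = {0}

/-- The subalgebra `B` of `R` is `H`-semiprime. -/
def IsHSemiprimeIn (B : Set R) : Prop :=
  ∀ I : Set R, IsHIdealIn k H B I → IsNilpotentSet I → I = {0}

/-- `R` is `H`-prime. -/
def IsHPrime : Prop :=
  ∀ I J : Set R, IsHIdeal k H I → IsHIdeal k H J →
    (∀ a ∈ I, ∀ b ∈ J, a * b = 0) → I = {0} ∨ J = {0}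

/-- The `H`-ideal of `R` generated by `E`. -/
def genHIdeal (E : Set R) : Set R := ⋂₀ {I : Set R | IsHIdeal k H I ∧ E ⊆ I}

end Defs


section Radical

variable (k H : Type*) {R : Type*} [CommRing k] [Ring H] [Algebra k H]
  [Coalgebra k H] [NonUnitalRing R] [Module k R]
  [SMulCommClass k R R] [IsScalarTower k R R] [HModAlg k H R]

/-- The `H`-ideal `I` is a radical (`r_{Hb}`-) `H`-ideal: every non-zero
`H`-homomorphic image of `I` (equivalently, every quotient `I/J` of `I` by a proper
`H`-ideal `J` of `I`) contains a non-zero nilpotent `H`-ideal `K/J`. -/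
def IsRadicalHIdeal (I : Set R) : Prop :=
  IsHIdeal k H I ∧
    ∀ J : Set R, IsHIdealIn k H I J → J ≠ I →
      ∃ K : Set R, IsHIdealIn k H I K ∧ J ⊆ K ∧ J ≠ K ∧ IsNilpotentSetMod K J

/-- `B` is the `H`-Baer radical of `R`: the largest radical `H`-ideal of `R`. -/
def IsHBaerRadical (B : Set R) : Prop :=
  IsRadicalHIdeal k H B ∧ ∀ I : Set R, IsRadicalHIdeal k H I → I ⊆ B

end Radical

/-- `P` is an `H`-semiprime ideal of `R` (i.e. `R/P` has no non-zero nilpotent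
`H`-ideals). -/
def IsHSemiprimeIdeal (k H : Type*) {R : Type*} [CommRing k] [Ring H] [Algebra k H]
    [Coalgebra k H] [NonUnitalRing R] [Module k R] [SMulCommClass k R R]
    [IsScalarTower k R R] [HModAlg k H R] (P : Set R) : Prop :=
  IsHIdeal k H P ∧ ∀ K : Set R, IsHIdeal k H K → IsNilpotentSetMod K P → K ⊆ P

section Helpers

variable {k H : Type*} {R : Type*} [CommRing k] [Ring H] [Algebra k H]
  [Coalgebra k H] [NonUnitalRing R] [Module k R]
  [SMulCommClass k R R] [IsScalarTower k R R] [HModAlg k H R]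

lemma hact_zero (h : H) : hact k H h (0 : R) = 0 :=
  map_zero (HModAlg.hsmul (k := k) (R := R) h)

lemma hact_add (h : H) (x y : R) :
    hact k H h (x + y) = hact k H h x + hact k H h y :=
  map_add (HModAlg.hsmul (k := k) (R := R) h) x y

lemma hact_neg (h : H) (x : R) : hact k H h (-x) = - hact k H h x :=
  map_neg (HModAlg.hsmul (k := k) (R := R) h) x

lemma hact_mul_mem {S : AddSubmonoid R} {a b : R}
    (hab : ∀ h₁ h₂ : H, hact k H h₁ a * hact k H h₂ b ∈ S) (h : H) :
    hact k H h (a * b) ∈ S := by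
  show HModAlg.hsmul (k := k) h (a * b) ∈ S
  rw [HModAlg.hsmul_mul]
  generalize (Coalgebra.comul h : H ⊗[k] H) = t
  induction t using TensorProduct.induction_on with
  | zero => simpa using S.zero_mem
  | tmul h₁ h₂ => simpa [hact] using hab h₁ h₂
  | add x y hx hy =>
      rw [map_add, map_add]
      exact S.add_mem hx hy

lemma prodSeq_succ {R : Type*} [Mul R] (f : ℕ → R) (n : ℕ) :
    prodSeq f (n + 1) = prodSeq f n * f (n + 1) := rfl

end Helpers
section Helpers2

variable {k H : Type*} {R : Type*} [CommRing k] [Ring H] [Algebra k H]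
  [Coalgebra k H] [NonUnitalRing R] [Module k R]
  [SMulCommClass k R R] [IsScalarTower k R R] [HModAlg k H R]

lemma prodSeq_mem {Bs I : Set R} (hI : IsHIdealIn k H Bs I) {f : ℕ → R}
    (hf : ∀ i, f i ∈ I) : ∀ n, prodSeq f n ∈ I
  | 0 => hf 0
  | n + 1 => hI.mul_mem_right (prodSeq_mem hI hf n) (hI.subset (hf (n + 1)))

lemma prodSeq_sub_mem {Bs J : Set R} (hB : IsHIdeal k H Bs) (hJ : IsHIdealIn k H Bs J)
    {f g : ℕ → R} (hf : ∀ i, f i ∈ Bs) (hg : ∀ i, g i ∈ Bs)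
    (hfg : ∀ i, f i - g i ∈ J) : ∀ n, prodSeq f n - prodSeq g n ∈ J
  | 0 => hfg 0
  | n + 1 => by
    have key : prodSeq f (n + 1) - prodSeq g (n + 1) =
        prodSeq f n * (f (n + 1) - g (n + 1)) + (prodSeq f n - prodSeq g n) * g (n + 1) := by
      rw [prodSeq_succ, prodSeq_succ, mul_sub, sub_mul]
      abel
    rw [key]
    exact hJ.add_mem
      (hJ.mul_mem_left (prodSeq_mem hB hf n) (hfg (n + 1)))
      (hJ.mul_mem_right (prodSeq_sub_mem hB hJ hf hg hfg n) (hg (n + 1)))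

lemma prodSeq_group3 {R : Type*} [NonUnitalRing R] (f : ℕ → R) :
    ∀ m, prodSeq f (3 * m + 2) = prodSeq (fun i => f (3 * i) * f (3 * i + 1) * f (3 * i + 2)) m
  | 0 => by
    show prodSeq f 2 = f 0 * f 1 * f 2
    rw [show (2 : ℕ) = 1 + 1 from rfl, prodSeq_succ, show (1 : ℕ) = 0 + 1 from rfl, prodSeq_succ]
    rfl
  | m + 1 => by
    have e1 : 3 * (m + 1) + 2 = 3 * m + 2 + 1 + 1 + 1 := by ring
    rw [e1, prodSeq_succ, prodSeq_succ, prodSeq_succ, prodSeq_group3 f m, prodSeq_succ]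
    have i1 : 3 * m + 2 + 1 = 3 * (m + 1) := by ring
    have i4 : 3 * (m + 1) + 1 + 1 = 3 * (m + 1) + 2 := by ring
    rw [i1, i4]
    simp only [mul_assoc]
    congr 4

lemma isHIdeal_univ : IsHIdeal k H (Set.univ : Set R) := by
  refine ⟨subset_rfl, trivial, ?_, ?_, ?_, ?_, ?_⟩ <;> intros <;> trivial

lemma isHIdeal_sInter {S : Set (Set R)} (h : ∀ J ∈ S, IsHIdeal k H J) :
    IsHIdeal k H (⋂₀ S) := by
  refine ⟨fun x _ => trivial, ?_, ?_, ?_, ?_, ?_, ?_⟩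
  · exact fun J hJ => (h J hJ).zero_mem
  · intro x y hx hy J hJ
    exact (h J hJ).add_mem (hx J hJ) (hy J hJ)
  · intro x hx J hJ
    exact (h J hJ).neg_mem (hx J hJ)
  · intro x _ y hy J hJ
    exact (h J hJ).mul_mem_left trivial (hy J hJ)
  · intro x hx y _ J hJ
    exact (h J hJ).mul_mem_right (hx J hJ) trivial
  · intro hh x hx J hJ
    exact (h J hJ).hsmul_mem hh (hx J hJ)

lemma isHIdealIn_of_subset {Bs K : Set R} (hK : IsHIdeal k H K) (hsub : K ⊆ Bs) :
    IsHIdealIn k H Bs K := by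
  refine ⟨hsub, hK.zero_mem, hK.add_mem, hK.neg_mem, ?_, ?_, hK.hsmul_mem⟩
  · intro x _ y hy
    exact hK.mul_mem_left trivial hy
  · intro x hx y _
    exact hK.mul_mem_right hx trivial

lemma isHIdealIn_addSet {Bs I J : Set R}
    (hBadd : ∀ {x y : R}, x ∈ Bs → y ∈ Bs → x + y ∈ Bs)
    (hI : IsHIdealIn k H Bs I) (hJ : IsHIdealIn k H Bs J) :
    IsHIdealIn k H Bs {x | ∃ a ∈ I, ∃ b ∈ J, x = a + b} := by
  refine ⟨?_, ⟨0, hI.zero_mem, 0, hJ.zero_mem, (add_zero 0).symm⟩, ?_, ?_, ?_, ?_, ?_⟩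
  · rintro x ⟨a, ha, b, hb, rfl⟩
    exact hBadd (hI.subset ha) (hJ.subset hb)
  · rintro x y ⟨a, ha, b, hb, rfl⟩ ⟨a', ha', b', hb', rfl⟩
    exact ⟨a + a', hI.add_mem ha ha', b + b', hJ.add_mem hb hb', by abel⟩
  · rintro x ⟨a, ha, b, hb, rfl⟩
    exact ⟨-a, hI.neg_mem ha, -b, hJ.neg_mem hb, by abel⟩
  · rintro x hx y ⟨a, ha, b, hb, rfl⟩
    exact ⟨x * a, hI.mul_mem_left hx ha, x * b, hJ.mul_mem_left hx hb, (mul_add x a b)⟩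
  · rintro x ⟨a, ha, b, hb, rfl⟩ y hy
    exact ⟨a * y, hI.mul_mem_right ha hy, b * y, hJ.mul_mem_right hb hy, (add_mul a b y)⟩
  · rintro h x ⟨a, ha, b, hb, rfl⟩
    exact ⟨hact k H h a, hI.hsmul_mem h ha, hact k H h b, hJ.hsmul_mem h hb, (hact_add h a b)⟩

end Helpers2
section Helpers3

variable {k H : Type*} {R : Type*} [CommRing k] [Ring H] [Algebra k H]
  [Coalgebra k H] [NonUnitalRing R] [Module k R]
  [SMulCommClass k R R] [IsScalarTower k R R] [HModAlg k H R]

lemma radical_le_semiprime {I P : Set R} (hI : IsRadicalHIdeal k H I)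
    (hP : IsHSemiprimeIdeal k H P) : I ⊆ P := by
  by_contra hns
  have hJ : IsHIdealIn k H I (I ∩ P) := by
    refine ⟨Set.inter_subset_left, ⟨hI.1.zero_mem, hP.1.zero_mem⟩, ?_, ?_, ?_, ?_, ?_⟩
    · intro x y hx hy
      exact ⟨hI.1.add_mem hx.1 hy.1, hP.1.add_mem hx.2 hy.2⟩
    · intro x hx
      exact ⟨hI.1.neg_mem hx.1, hP.1.neg_mem hx.2⟩
    · intro x hx y hy
      exact ⟨hI.1.mul_mem_left trivial hy.1, hP.1.mul_mem_left trivial hy.2⟩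
    · intro x hx y hy
      exact ⟨hI.1.mul_mem_right hx.1 trivial, hP.1.mul_mem_right hx.2 trivial⟩
    · intro h x hx
      exact ⟨hI.1.hsmul_mem h hx.1, hP.1.hsmul_mem h hx.2⟩
  have hJne : I ∩ P ≠ I := by
    intro hEq
    exact hns fun x hx => ((hEq.symm ▸ hx : x ∈ I ∩ P)).2
  obtain ⟨K, hK, hJK, hJneK, hKnil⟩ := hI.2 (I ∩ P) hJ hJne
  obtain ⟨n, hn⟩ := hKnil
  -- the H-ideal of R generated by K
  set G : Set R := K ∪ Set.image2 (· * ·) Set.univ K ∪ Set.image2 (· * ·) K Set.univ ∪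
      Set.image2 (· * ·) (Set.image2 (· * ·) Set.univ K) Set.univ with hGdef
  have g1 : ∀ {x : R}, x ∈ K → x ∈ G := by
    intro x hx; exact Or.inl (Or.inl (Or.inl hx))
  have g2 : ∀ (r : R) {x : R}, x ∈ K → r * x ∈ G := by
    intro r x hx; exact Or.inl (Or.inl (Or.inr ⟨r, trivial, x, hx, rfl⟩))
  have g3 : ∀ {x : R}, x ∈ K → ∀ (r : R), x * r ∈ G := by
    intro x hx r; exact Or.inl (Or.inr ⟨x, hx, r, trivial, rfl⟩)
  have g4 : ∀ (r : R) {x : R}, x ∈ K → ∀ (r' : R), r * x * r' ∈ G := by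
    intro r x hx r'
    exact Or.inr ⟨r * x, ⟨r, trivial, x, hx, rfl⟩, r', trivial, rfl⟩
  have genCases : ∀ {x : R}, x ∈ G →
      (x ∈ K ∨ (∃ r m, m ∈ K ∧ x = r * m) ∨ (∃ m r, m ∈ K ∧ x = m * r) ∨
        (∃ r m r', m ∈ K ∧ x = r * m * r')) := by
    intro x hx
    rcases hx with ((hx | hx) | hx) | hx
    · exact Or.inl hx
    · obtain ⟨r, -, m, hm, rfl⟩ := hx
      exact Or.inr (Or.inl ⟨r, m, hm, rfl⟩)
    · obtain ⟨m, hm, r, -, rfl⟩ := hx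
      exact Or.inr (Or.inr (Or.inl ⟨m, r, hm, rfl⟩))
    · obtain ⟨y, hy, r', -, rfl⟩ := hx
      obtain ⟨r, -, m, hm, rfl⟩ := hy
      exact Or.inr (Or.inr (Or.inr ⟨r, m, r', hm, rfl⟩))
  -- Khat ⊆ I
  have hKI : ∀ {x : R}, x ∈ K → x ∈ I := fun hx => hK.subset hx
  have hKhatI : ∀ {x : R}, x ∈ AddSubmonoid.closure G → x ∈ I := by
    intro x hx
    induction hx using AddSubmonoid.closure_induction with
    | mem x hx =>
      rcases genCases hx with hm | ⟨r, m, hm, rfl⟩ | ⟨m, r, hm, rfl⟩ | ⟨r, m, r', hm, rfl⟩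
      · exact hKI hm
      · exact hI.1.mul_mem_left trivial (hKI hm)
      · exact hI.1.mul_mem_right (hKI hm) trivial
      · exact hI.1.mul_mem_right (hI.1.mul_mem_left trivial (hKI hm)) trivial
    | zero => exact hI.1.zero_mem
    | add x y hx hy px py => exact hI.1.add_mem px py
  -- triple products fall back into K
  have trip : ∀ {y : R}, y ∈ AddSubmonoid.closure G →
      ∀ {a : R}, a ∈ I → ∀ {b : R}, b ∈ I → a * y * b ∈ K := by
    intro y hy
    induction hy using AddSubmonoid.closure_induction with
    | mem x hx =>
      intro a ha b hb
      rcases genCases hx with hm | ⟨r, m, hm, rfl⟩ | ⟨m, r, hm, rfl⟩ | ⟨r, m, r', hm, rfl⟩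
      · exact hK.mul_mem_right (hK.mul_mem_left ha hm) hb
      · have e : a * (r * m) * b = a * r * m * b := by simp only [mul_assoc]
        rw [e]
        exact hK.mul_mem_right (hK.mul_mem_left (hI.1.mul_mem_right ha trivial) hm) hb
      · have e : a * (m * r) * b = (a * m) * (r * b) := by simp only [mul_assoc]
        rw [e]
        exact hK.mul_mem_right (hK.mul_mem_left ha hm) (hI.1.mul_mem_left trivial hb)
      · have e : a * (r * m * r') * b = (a * r * m) * (r' * b) := by simp only [mul_assoc]
        rw [e]
        exact hK.mul_mem_right (hK.mul_mem_left (hI.1.mul_mem_right ha trivial) hm)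
          (hI.1.mul_mem_left trivial hb)
    | zero =>
      intro a ha b hb
      simpa using hK.zero_mem
    | add x y hx hy px py =>
      intro a ha b hb
      have e : a * (x + y) * b = a * x * b + a * y * b := by rw [mul_add, add_mul]
      rw [e]
      exact hK.add_mem (px ha hb) (py ha hb)
  -- closure properties of Khat
  have hneg : ∀ {x : R}, x ∈ AddSubmonoid.closure G → -x ∈ AddSubmonoid.closure G := by
    intro x hx
    induction hx using AddSubmonoid.closure_induction with
    | mem x hx =>
      apply AddSubmonoid.subset_closure
      rcases genCases hx with hm | ⟨r, m, hm, rfl⟩ | ⟨m, r, hm, rfl⟩ | ⟨r, m, r', hm, rfl⟩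
      · exact g1 (hK.neg_mem hm)
      · rw [show -(r * m) = r * -m by rw [mul_neg]]
        exact g2 r (hK.neg_mem hm)
      · rw [show -(m * r) = -m * r by rw [neg_mul]]
        exact g3 (hK.neg_mem hm) r
      · rw [show -(r * m * r') = r * -m * r' by rw [mul_neg, neg_mul]]
        exact g4 r (hK.neg_mem hm) r'
    | zero => simpa using AddSubmonoid.zero_mem _
    | add x y hx hy px py =>
      rw [neg_add]
      exact AddSubmonoid.add_mem _ px py
  have hmulL : ∀ (r : R) {x : R}, x ∈ AddSubmonoid.closure G →
      r * x ∈ AddSubmonoid.closure G := by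
    intro r x hx
    induction hx using AddSubmonoid.closure_induction with
    | mem x hx =>
      apply AddSubmonoid.subset_closure
      rcases genCases hx with hm | ⟨r₀, m, hm, rfl⟩ | ⟨m, r₀, hm, rfl⟩ | ⟨r₀, m, r₁, hm, rfl⟩
      · exact g2 r hm
      · rw [show r * (r₀ * m) = (r * r₀) * m by rw [mul_assoc]]
        exact g2 _ hm
      · rw [show r * (m * r₀) = r * m * r₀ by rw [mul_assoc]]
        exact g4 r hm r₀
      · rw [show r * (r₀ * m * r₁) = (r * r₀) * m * r₁ by simp only [mul_assoc]]
        exact g4 _ hm r₁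
    | zero =>
      rw [mul_zero]
      exact AddSubmonoid.zero_mem _
    | add x y hx hy px py =>
      rw [mul_add]
      exact AddSubmonoid.add_mem _ px py
  have hmulR : ∀ {x : R}, x ∈ AddSubmonoid.closure G → ∀ (r : R),
      x * r ∈ AddSubmonoid.closure G := by
    intro x hx
    induction hx using AddSubmonoid.closure_induction with
    | mem x hx =>
      intro r
      apply AddSubmonoid.subset_closure
      rcases genCases hx with hm | ⟨r₀, m, hm, rfl⟩ | ⟨m, r₀, hm, rfl⟩ | ⟨r₀, m, r₁, hm, rfl⟩
      · exact g3 hm r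
      · exact g4 r₀ hm r
      · rw [show m * r₀ * r = m * (r₀ * r) by rw [mul_assoc]]
        exact g3 hm _
      · rw [show r₀ * m * r₁ * r = r₀ * m * (r₁ * r) by rw [mul_assoc]]
        exact g4 r₀ hm _
    | zero =>
      intro r
      rw [zero_mul]
      exact AddSubmonoid.zero_mem _
    | add x y hx hy px py =>
      intro r
      rw [add_mul]
      exact AddSubmonoid.add_mem _ (px r) (py r)
  -- H-stability
  have hM2stab : ∀ (h : H) {x : R},
      x ∈ AddSubmonoid.closure (Set.image2 (· * ·) Set.univ K) →
      hact k H h x ∈ AddSubmonoid.closure (Set.image2 (· * ·) Set.univ K) := by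
    intro h x hx
    induction hx using AddSubmonoid.closure_induction with
    | mem x hx =>
      obtain ⟨r, -, m, hm, rfl⟩ := hx
      refine hact_mul_mem (fun h₁ h₂ => AddSubmonoid.subset_closure ?_) h
      exact ⟨hact k H h₁ r, trivial, hact k H h₂ m, hK.hsmul_mem h₂ hm, rfl⟩
    | zero =>
      rw [hact_zero]
      exact AddSubmonoid.zero_mem _
    | add x y hx hy px py =>
      rw [hact_add]
      exact AddSubmonoid.add_mem _ px py
  have hM2mulR : ∀ {x : R},
      x ∈ AddSubmonoid.closure (Set.image2 (· * ·) Set.univ K) → ∀ (r : R),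
      x * r ∈ AddSubmonoid.closure G := by
    intro x hx
    induction hx using AddSubmonoid.closure_induction with
    | mem x hx =>
      intro r
      obtain ⟨r₀, -, m, hm, rfl⟩ := hx
      exact AddSubmonoid.subset_closure (g4 r₀ hm r)
    | zero =>
      intro r
      rw [zero_mul]
      exact AddSubmonoid.zero_mem _
    | add x y hx hy px py =>
      intro r
      rw [add_mul]
      exact AddSubmonoid.add_mem _ (px r) (py r)
  have hstab : ∀ (h : H) {x : R}, x ∈ AddSubmonoid.closure G →
      hact k H h x ∈ AddSubmonoid.closure G := by
    intro h x hx
    induction hx using AddSubmonoid.closure_induction with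
    | mem x hx =>
      rcases genCases hx with hm | ⟨r, m, hm, rfl⟩ | ⟨m, r, hm, rfl⟩ | ⟨r, m, r', hm, rfl⟩
      · exact AddSubmonoid.subset_closure (g1 (hK.hsmul_mem h hm))
      · exact hact_mul_mem
          (fun h₁ h₂ => AddSubmonoid.subset_closure (g2 _ (hK.hsmul_mem h₂ hm))) h
      · exact hact_mul_mem
          (fun h₁ h₂ => AddSubmonoid.subset_closure (g3 (hK.hsmul_mem h₁ hm) _)) h
      · refine hact_mul_mem (fun h₁ h₂ => ?_) h
        exact hM2mulR (hM2stab h₁ (AddSubmonoid.subset_closure ⟨r, trivial, m, hm, rfl⟩)) _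
    | zero =>
      rw [hact_zero]
      exact AddSubmonoid.zero_mem _
    | add x y hx hy px py =>
      rw [hact_add]
      exact AddSubmonoid.add_mem _ px py
  -- Khat is an H-ideal of R
  have hKhatIdeal : IsHIdeal k H ((AddSubmonoid.closure G : AddSubmonoid R) : Set R) := by
    refine ⟨fun x _ => trivial, AddSubmonoid.zero_mem _, ?_, ?_, ?_, ?_, ?_⟩
    · intro x y hx hy
      exact AddSubmonoid.add_mem _ hx hy
    · intro x hx
      exact hneg hx
    · intro x _ y hy
      exact hmulL x hy
    · intro x hx y _
      exact hmulR hx y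
    · intro h x hx
      exact hstab h hx
  -- Khat is nilpotent mod P
  have hKhatnil : IsNilpotentSetMod ((AddSubmonoid.closure G : AddSubmonoid R) : Set R) P := by
    refine ⟨3 * n + 2, fun f hf => ?_⟩
    have hg : ∀ i, f (3 * i) * f (3 * i + 1) * f (3 * i + 2) ∈ K := by
      intro i
      exact trip (hf (3 * i + 1)) (hKhatI (hf (3 * i))) (hKhatI (hf (3 * i + 2)))
    rw [prodSeq_group3]
    exact (hn _ hg).2
  have hKhatP := hP.2 _ hKhatIdeal hKhatnil
  -- contradiction
  have hex : ∃ x ∈ K, x ∉ I ∩ P := by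
    by_contra hc
    push_neg at hc
    exact hJneK (Set.Subset.antisymm hJK hc)
  obtain ⟨x, hxK, hxJ⟩ := hex
  exact hxJ ⟨hKI hxK, hKhatP (AddSubmonoid.subset_closure (g1 hxK))⟩

end Helpers3
/-- with `N_α` defined by the indicated transfinite recursion
(`N_{α+1}` is the sum of all `H`-ideals of `R` which are nilpotent mod `N_α`, i.e.
the smallest `H`-ideal containing all of them, and `N_β = ⋃_{α<β} N_α` at limits),
if `N_τ = N_{τ+1}` then `N_τ = r_{Hb}(R) = ⋂ {H-semiprime ideals of R}`. -/
theorem stmt11 {k H R : Type*} [CommRing k] [Ring H] [Algebra k H] [Coalgebra k H]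
    [NonUnitalRing R] [Module k R] [SMulCommClass k R R] [IsScalarTower k R R]
    [HModAlg k H R] (N : Ordinal → Set R)
    (h0 : N 0 = {0})
    (hsucc : ∀ α : Ordinal, N (α + 1) =
      ⋂₀ {J : Set R | IsHIdeal k H J ∧ N α ⊆ J ∧
        ∀ K : Set R, IsHIdeal k H K → N α ⊆ K → IsNilpotentSetMod K (N α) → K ⊆ J})
    (hlim : ∀ β : Ordinal, Order.IsSuccLimit β → N β = {x : R | ∃ α < β, x ∈ N α})
    (τ : Ordinal) (hτ : N τ = N (τ + 1))
    (B : Set R) (hB : IsHBaerRadical k H B) :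
    N τ = B ∧ N τ = ⋂₀ {P : Set R | IsHSemiprimeIdeal k H P} := by

  -- monotonicity of N
  have mono : ∀ β : Ordinal, ∀ α ≤ β, N α ⊆ N β := by
    intro β
    induction β using Ordinal.induction with
    | _ β IH =>
      intro α hαβ
      rcases lt_or_eq_of_le hαβ with hlt | rfl
      · rcases Ordinal.zero_or_succ_or_isSuccLimit β with rfl | ⟨γ, rfl⟩ | hβ
        · exact absurd hlt (not_lt_zero (a := α))
        · have h1 : N α ⊆ N γ := IH γ (Order.lt_succ γ) α (Order.lt_succ_iff.mp hlt)
          have h2 : N γ ⊆ N (γ + 1) := by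
            rw [hsucc γ]
            exact Set.subset_sInter fun J hJ => hJ.2.1
          rw [← Ordinal.add_one_eq_succ]
          exact h1.trans h2
        · rw [hlim β hβ]
          exact fun x hx => ⟨α, hlt, hx⟩
      · exact subset_rfl
  -- each N α is an H-ideal
  have idl : ∀ α : Ordinal, IsHIdeal k H (N α) := by
    intro α
    induction α using Ordinal.induction with
    | _ β IH =>
      rcases Ordinal.zero_or_succ_or_isSuccLimit β with rfl | ⟨γ, rfl⟩ | hβ
      · rw [h0]
        refine ⟨fun x _ => trivial, rfl, ?_, ?_, ?_, ?_, ?_⟩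
        · intro x y hx hy
          rw [Set.mem_singleton_iff] at *
          rw [hx, hy, add_zero]
        · intro x hx
          rw [Set.mem_singleton_iff] at *
          rw [hx, neg_zero]
        · intro x _ y hy
          rw [Set.mem_singleton_iff] at *
          rw [hy, mul_zero]
        · intro x hx y _
          rw [Set.mem_singleton_iff] at *
          rw [hx, zero_mul]
        · intro h x hx
          rw [Set.mem_singleton_iff] at *
          rw [hx, hact_zero]
      · rw [← Ordinal.add_one_eq_succ, hsucc γ]
        exact isHIdeal_sInter fun J hJ => hJ.1
      · rw [hlim β hβ]
        refine ⟨fun x _ => trivial, ⟨0, hβ.pos, by rw [h0]; rfl⟩, ?_, ?_, ?_, ?_, ?_⟩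
        · rintro x y ⟨α₁, hα₁, hx⟩ ⟨α₂, hα₂, hy⟩
          exact ⟨max α₁ α₂, max_lt hα₁ hα₂,
            (IH _ (max_lt hα₁ hα₂)).add_mem (mono _ _ (le_max_left _ _) hx)
              (mono _ _ (le_max_right _ _) hy)⟩
        · rintro x ⟨α₁, hα₁, hx⟩
          exact ⟨α₁, hα₁, (IH _ hα₁).neg_mem hx⟩
        · rintro x _ y ⟨α₁, hα₁, hy⟩
          exact ⟨α₁, hα₁, (IH _ hα₁).mul_mem_left trivial hy⟩
        · rintro x ⟨α₁, hα₁, hx⟩ y _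
          exact ⟨α₁, hα₁, (IH _ hα₁).mul_mem_right hx trivial⟩
        · rintro h x ⟨α₁, hα₁, hx⟩
          exact ⟨α₁, hα₁, (IH _ hα₁).hsmul_mem h hx⟩
  -- N τ is an H-semiprime ideal
  have hNsp : IsHSemiprimeIdeal k H (N τ) := by
    refine ⟨idl τ, ?_⟩
    intro K hKid hKnil
    obtain ⟨n, hn⟩ := hKnil
    have hK2id : IsHIdealIn k H (Set.univ : Set R)
        {x : R | ∃ a ∈ K, ∃ b ∈ N τ, x = a + b} :=
      isHIdealIn_addSet (fun _ _ => trivial) hKid (idl τ)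
    have hK2nil : IsNilpotentSetMod {x : R | ∃ a ∈ K, ∃ b ∈ N τ, x = a + b} (N τ) := by
      refine ⟨n, fun f hf => ?_⟩
      choose a ha b hb heq using hf
      have hfg : ∀ i, f i - a i ∈ N τ := by
        intro i
        rw [heq i, add_sub_cancel_left]
        exact hb i
      have hdiff : prodSeq f n - prodSeq a n ∈ N τ :=
        prodSeq_sub_mem isHIdeal_univ (idl τ) (fun _ => trivial) (fun _ => trivial) hfg n
      have : prodSeq f n = (prodSeq f n - prodSeq a n) + prodSeq a n := by abel
      rw [this]
      exact (idl τ).add_mem hdiff (hn a ha)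
    have hτsub : N τ ⊆ {x : R | ∃ a ∈ K, ∃ b ∈ N τ, x = a + b} :=
      fun b hb => ⟨0, hKid.zero_mem, b, hb, (zero_add b).symm⟩
    have hK2sub : {x : R | ∃ a ∈ K, ∃ b ∈ N τ, x = a + b} ⊆ N (τ + 1) := by
      rw [hsucc τ]
      exact Set.subset_sInter fun J' hJ' => hJ'.2.2 _ hK2id hτsub hK2nil
    intro x hx
    rw [hτ]
    exact hK2sub ⟨x, hx, 0, (idl τ).zero_mem, (add_zero x).symm⟩
  -- every semiprime ideal contains every N α
  have hle : ∀ P : Set R, IsHSemiprimeIdeal k H P → ∀ α : Ordinal, N α ⊆ P := by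
    intro P hP α
    induction α using Ordinal.induction with
    | _ β IH =>
      rcases Ordinal.zero_or_succ_or_isSuccLimit β with rfl | ⟨γ, rfl⟩ | hβ
      · rw [h0]
        intro x hx
        rw [Set.mem_singleton_iff] at hx
        rw [hx]
        exact hP.1.zero_mem
      · rw [← Ordinal.add_one_eq_succ, hsucc γ]
        apply Set.sInter_subset_of_mem
        refine ⟨hP.1, IH γ (Order.lt_succ γ), fun K' h1 h2 h3 => hP.2 K' h1 ?_⟩
        obtain ⟨n, hn⟩ := h3
        exact ⟨n, fun f hf => IH γ (Order.lt_succ γ) (hn f hf)⟩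
      · rw [hlim β hβ]
        rintro x ⟨γ, hγ, hx⟩
        exact IH γ hγ hx
  -- N τ is a radical H-ideal
  have hrad : IsRadicalHIdeal k H (N τ) := by
    refine ⟨idl τ, ?_⟩
    intro J hJ hJne
    have hτS : ¬ N τ ⊆ J := fun hsub => hJne (Set.Subset.antisymm hJ.subset hsub)
    obtain ⟨α₀, hα₀, hmin⟩ := Ordinal.lt_wf.has_min {α : Ordinal | ¬ N α ⊆ J} ⟨τ, hτS⟩
    have hlow : ∀ γ < α₀, N γ ⊆ J := fun γ hγ => of_not_not (fun hc => hmin γ hc hγ)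
    have hα₀τ : α₀ ≤ τ := le_of_not_gt (hmin τ hτS)
    rcases Ordinal.zero_or_succ_or_isSuccLimit α₀ with rfl | ⟨γ, rfl⟩ | hlimα
    · refine absurd ?_ hα₀
      rw [h0]
      intro x hx
      rw [Set.mem_singleton_iff] at hx
      rw [hx]
      exact hJ.zero_mem
    · rw [← Ordinal.add_one_eq_succ] at hα₀ hα₀τ
      have hγJ : N γ ⊆ J := hlow γ (Order.lt_succ γ)
      by_cases hall : ∀ K' : Set R, IsHIdeal k H K' → N γ ⊆ K' →
          IsNilpotentSetMod K' (N γ) → K' ⊆ J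
      · -- then N (γ+1) ⊆ J, contradiction
        refine absurd ?_ hα₀
        have hTJ : ∀ {x : R},
            x ∈ AddSubmonoid.closure (⋃₀ {K' : Set R | IsHIdeal k H K' ∧ N γ ⊆ K' ∧
              IsNilpotentSetMod K' (N γ)}) → x ∈ J := by
          intro x hx
          induction hx using AddSubmonoid.closure_induction with
          | mem x hx =>
            obtain ⟨K', hK', hxK⟩ := hx
            exact hall K' hK'.1 hK'.2.1 hK'.2.2 hxK
          | zero => exact hJ.zero_mem
          | add x y hx hy px py => exact hJ.add_mem px py
        have hTideal : IsHIdeal k H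
            ((AddSubmonoid.closure (⋃₀ {K' : Set R | IsHIdeal k H K' ∧ N γ ⊆ K' ∧
              IsNilpotentSetMod K' (N γ)}) : AddSubmonoid R) : Set R) := by
          have gen : ∀ {x : R},
              x ∈ ⋃₀ {K' : Set R | IsHIdeal k H K' ∧ N γ ⊆ K' ∧
                IsNilpotentSetMod K' (N γ)} →
              (-x ∈ ⋃₀ {K' : Set R | IsHIdeal k H K' ∧ N γ ⊆ K' ∧
                IsNilpotentSetMod K' (N γ)}) ∧
              (∀ r : R, r * x ∈ ⋃₀ {K' : Set R | IsHIdeal k H K' ∧ N γ ⊆ K' ∧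
                IsNilpotentSetMod K' (N γ)}) ∧
              (∀ r : R, x * r ∈ ⋃₀ {K' : Set R | IsHIdeal k H K' ∧ N γ ⊆ K' ∧
                IsNilpotentSetMod K' (N γ)}) ∧
              (∀ h : H, hact k H h x ∈ ⋃₀ {K' : Set R | IsHIdeal k H K' ∧ N γ ⊆ K' ∧
                IsNilpotentSetMod K' (N γ)}) := by
            rintro x ⟨K', hK', hxK⟩
            exact ⟨⟨K', hK', hK'.1.neg_mem hxK⟩,
              fun r => ⟨K', hK', hK'.1.mul_mem_left trivial hxK⟩,
              fun r => ⟨K', hK', hK'.1.mul_mem_right hxK trivial⟩,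
              fun h => ⟨K', hK', hK'.1.hsmul_mem h hxK⟩⟩
          refine ⟨fun x _ => trivial, AddSubmonoid.zero_mem _, ?_, ?_, ?_, ?_, ?_⟩
          · intro x y hx hy
            exact AddSubmonoid.add_mem _ hx hy
          · intro x hx
            induction hx using AddSubmonoid.closure_induction with
            | mem x hx => exact AddSubmonoid.subset_closure (gen hx).1
            | zero => simpa using AddSubmonoid.zero_mem _
            | add x y hx hy px py =>
              rw [neg_add]
              exact AddSubmonoid.add_mem _ px py
          · intro r _ x hx
            induction hx using AddSubmonoid.closure_induction with
            | mem x hx => exact AddSubmonoid.subset_closure ((gen hx).2.1 r)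
            | zero =>
              rw [mul_zero]
              exact AddSubmonoid.zero_mem _
            | add x y hx hy px py =>
              rw [mul_add]
              exact AddSubmonoid.add_mem _ px py
          · intro x hx r _
            induction hx using AddSubmonoid.closure_induction with
            | mem x hx => exact AddSubmonoid.subset_closure ((gen hx).2.2.1 r)
            | zero =>
              rw [zero_mul]
              exact AddSubmonoid.zero_mem _
            | add x y hx hy px py =>
              rw [add_mul]
              exact AddSubmonoid.add_mem _ px py
          · intro h x hx
            induction hx using AddSubmonoid.closure_induction with
            | mem x hx => exact AddSubmonoid.subset_closure ((gen hx).2.2.2 h)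
            | zero =>
              rw [hact_zero]
              exact AddSubmonoid.zero_mem _
            | add x y hx hy px py =>
              rw [hact_add]
              exact AddSubmonoid.add_mem _ px py
        have hNγmem : N γ ∈ {K' : Set R | IsHIdeal k H K' ∧ N γ ⊆ K' ∧
            IsNilpotentSetMod K' (N γ)} :=
          ⟨idl γ, subset_rfl, ⟨0, fun f hf => hf 0⟩⟩
        have hsub1 : N (γ + 1) ⊆
            ((AddSubmonoid.closure (⋃₀ {K' : Set R | IsHIdeal k H K' ∧ N γ ⊆ K' ∧
              IsNilpotentSetMod K' (N γ)}) : AddSubmonoid R) : Set R) := by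
          rw [hsucc γ]
          refine Set.sInter_subset_of_mem ⟨hTideal, ?_, ?_⟩
          · exact fun x hx => AddSubmonoid.subset_closure ⟨N γ, hNγmem, hx⟩
          · intro K' h1 h2 h3 x hx
            exact AddSubmonoid.subset_closure ⟨K', ⟨h1, h2, h3⟩, hx⟩
        exact fun x hx => hTJ (hsub1 hx)
      · -- get a nilpotent H-ideal K not inside J
        push_neg at hall
        obtain ⟨K, hKid, hKγ, hKnil, hKJ⟩ := hall
        have hKsucc : K ⊆ N (γ + 1) := by
          rw [hsucc γ]
          exact Set.subset_sInter fun J' hJ' => hJ'.2.2 K hKid hKγ hKnil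
        have hKτ : K ⊆ N τ := hKsucc.trans (mono τ (γ + 1) hα₀τ)
        obtain ⟨n, hn⟩ := hKnil
        have hKin : IsHIdealIn k H (N τ) K := isHIdealIn_of_subset hKid hKτ
        refine ⟨{x | ∃ a ∈ K, ∃ b ∈ J, x = a + b},
          isHIdealIn_addSet (fun hx hy => (idl τ).add_mem hx hy) hKin hJ, ?_, ?_, ?_⟩
        · exact fun b hb => ⟨0, hKid.zero_mem, b, hb, (zero_add b).symm⟩
        · obtain ⟨x, hxK, hxJ⟩ : ∃ x ∈ K, x ∉ J := by
            by_contra hc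
            push_neg at hc
            exact hKJ hc
          intro hEq
          exact hxJ (hEq ▸ (⟨x, hxK, 0, hJ.zero_mem, (add_zero x).symm⟩ :
            x ∈ {x | ∃ a ∈ K, ∃ b ∈ J, x = a + b}))
        · refine ⟨n, fun f hf => ?_⟩
          choose a ha b hb heq using hf
          have hfg : ∀ i, f i - a i ∈ J := by
            intro i
            rw [heq i, add_sub_cancel_left]
            exact hb i
          have hfτ : ∀ i, f i ∈ N τ := by
            intro i
            rw [heq i]
            exact (idl τ).add_mem (hKτ (ha i)) (hJ.subset (hb i))
          have hdiff : prodSeq f n - prodSeq a n ∈ J :=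
            prodSeq_sub_mem (idl τ) hJ hfτ (fun i => hKτ (ha i)) hfg n
          have : prodSeq f n = (prodSeq f n - prodSeq a n) + prodSeq a n := by abel
          rw [this]
          exact hJ.add_mem hdiff (hγJ (hn a ha))
    · refine absurd ?_ hα₀
      rw [hlim α₀ hlimα]
      rintro x ⟨γ, hγ, hx⟩
      exact hlow γ hγ hx
  constructor
  · exact Set.Subset.antisymm (hB.2 _ hrad) (radical_le_semiprime hB.1 hNsp)
  · apply Set.Subset.antisymm
    · exact Set.subset_sInter fun P hP => hle P hP τ
    · exact Set.sInter_subset_of_mem hNsp
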